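/- Consider the group SAIR(S) model with β, σ, γ, κ > 0, δ > 0 and q ∈ [0,1]. If R₀ := max( β/(κ+γ+σ), β(qγ+(1−q)κ+σ)/(γ(κ+σ)) ) < 1, then for every solution (S, A, I, R) with initial condition satisfying S(0), A(0), I(0), R(0) ∈ [0,1] and S(0)+A(0)+I(0)+R(0) = 1, one has (S(t), A(t), I(t), R(t)) → (1, 0, 0, 0) as t → ∞. -/

import Mathlib

set_option maxHeartbeats 1000000
set_option maxRecDepth 10000

open Filter

section SairsAux

lemma sairs_hasDerivAt_negSq (u : ℝ) :
    HasDerivAt (fun x : ℝ => (min x 0)^2) (2 * min u 0) u := by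
  rcases lt_trichotomy u 0 with h | h | h
  · have : (fun x : ℝ => x^2) =ᶠ[nhds u] fun x => (min x 0)^2 := by
      filter_upwards [eventually_lt_nhds h] with x hx
      rw [min_eq_left hx.le]
    have h2 : HasDerivAt (fun x : ℝ => x^2) (2*u) u := by
      simpa using (hasDerivAt_pow 2 u)
    have := h2.congr_of_eventuallyEq this.symm
    rwa [min_eq_left h.le]
  · subst h
    rw [hasDerivAt_iff_tendsto]
    refine squeeze_zero (g := fun x => |x|) (fun x => by positivity) (fun x => ?_) ?_
    · show ‖x - 0‖⁻¹ * ‖(min x 0)^2 - (min 0 0)^2 - (x - 0) • (2 * min 0 0)‖ ≤ |x|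
      have hle : (min x 0)^2 ≤ x^2 := by
        rcases le_total x 0 with h | h
        · rw [min_eq_left h]
        · rw [min_eq_right h]; simpa using sq_nonneg x
      have heq : (min x 0)^2 - (min 0 0)^2 - (x - 0) • (2 * min (0:ℝ) 0) = (min x 0)^2 := by
        simp
      rw [heq]
      rcases eq_or_ne x 0 with rfl | hx
      · simp
      · rw [sub_zero, Real.norm_eq_abs, Real.norm_eq_abs,
          abs_of_nonneg (by positivity : (0:ℝ) ≤ (min x 0)^2),
          inv_mul_le_iff₀ (abs_pos.2 hx)]
        nlinarith [sq_abs x, sq_nonneg (min x 0)]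
    · have := continuous_abs.tendsto (0:ℝ)
      rwa [abs_zero] at this
  · have : (fun _ : ℝ => (0:ℝ)) =ᶠ[nhds u] fun x => (min x 0)^2 := by
      filter_upwards [eventually_gt_nhds h] with x hx
      rw [min_eq_right hx.le]; ring
    have := (hasDerivAt_const u (0:ℝ)).congr_of_eventuallyEq this.symm
    rw [min_eq_right h.le]; simpa using this

/-- One-sided Grönwall inequality on `[0, T]`. -/
lemma sairs_gron_Icc {f f' : ℝ → ℝ} {K T : ℝ} (hT : 0 ≤ T)
    (hf : ∀ t ∈ Set.Icc (0:ℝ) T, HasDerivAt f (f' t) t)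
    (hle : ∀ t ∈ Set.Icc (0:ℝ) T, f' t ≤ K * f t) :
    f T ≤ f 0 * Real.exp (K * T) := by
  set g : ℝ → ℝ := fun t => f t * Real.exp (-K * t) with hg_def
  have hg : ∀ t ∈ Set.Icc (0:ℝ) T,
      HasDerivAt g (f' t * Real.exp (-K * t) + f t * (Real.exp (-K * t) * (-K))) t := by
    intro t ht
    have hexp : HasDerivAt (fun x : ℝ => Real.exp (-K * x)) (Real.exp (-K * t) * (-K)) t := by
      have h1 : HasDerivAt (fun x : ℝ => -K * x) (-K) t := by
        simpa using (hasDerivAt_id t).const_mul (-K)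
      exact h1.exp
    exact (hf t ht).mul hexp
  have hanti : AntitoneOn g (Set.Icc 0 T) := by
    apply antitoneOn_of_deriv_nonpos (convex_Icc 0 T)
    · exact fun x hx => (hg x hx).continuousAt.continuousWithinAt
    · intro x hx
      rw [interior_Icc] at hx
      exact (hg x (Set.Ioo_subset_Icc_self hx)).differentiableAt.differentiableWithinAt
    · intro x hx
      rw [interior_Icc] at hx
      rw [(hg x (Set.Ioo_subset_Icc_self hx)).deriv]
      have := hle x (Set.Ioo_subset_Icc_self hx)
      nlinarith [Real.exp_pos (-K * x)]
  have h1 : g T ≤ g 0 := hanti (Set.left_mem_Icc.2 hT) (Set.right_mem_Icc.2 hT) hT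
  have h2 : g 0 = f 0 := by simp [hg_def]
  rw [h2] at h1
  have h3 := mul_le_mul_of_nonneg_right h1 (Real.exp_pos (K * T)).le
  calc f T = f T * Real.exp (-K * T) * Real.exp (K * T) := by
        rw [mul_assoc, ← Real.exp_add]; ring_nf; simp
    _ ≤ f 0 * Real.exp (K * T) := h3

lemma sairs_cross_bound {M a s i : ℝ} (hs : |s| ≤ M) (hi : |i| ≤ M) :
    min a 0 * s * i ≤ M * ((min a 0)^2 + (min s 0)^2 + (min i 0)^2) := by
  have hM : 0 ≤ M := le_trans (abs_nonneg s) hs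
  have hma : min a 0 ≤ 0 := min_le_right a 0
  obtain ⟨hs1, hs2⟩ := abs_le.1 hs
  obtain ⟨hi1, hi2⟩ := abs_le.1 hi
  rcases le_or_gt 0 s with h1 | h1
  · rcases le_or_gt 0 i with h2 | h2
    · nlinarith [sq_nonneg (min a 0), sq_nonneg (min s 0), sq_nonneg (min i 0),
        mul_nonneg h1 h2]
    · rw [min_eq_left h2.le]
      nlinarith [mul_nonneg (neg_nonneg.2 hma) h1, sq_nonneg (min a 0 - i),
        sq_nonneg (min s 0), sq_nonneg (min a 0 + i)]
  · rw [min_eq_left h1.le]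
    nlinarith [mul_nonneg (neg_nonneg.2 hma) (neg_nonneg.2 h1.le), sq_nonneg (min a 0 - s),
      sq_nonneg (min i 0), sq_nonneg (min a 0 + s)]

lemma sairs_key_ineq (β σ γ κ δ q M s a i r : ℝ)
    (hβ : 0 ≤ β) (hσ : 0 ≤ σ) (hγ : 0 ≤ γ) (hκ : 0 ≤ κ) (hδ : 0 ≤ δ)
    (hq0 : 0 ≤ q) (hq1 : q ≤ 1)
    (hs : |s| ≤ M) (ha : |a| ≤ M) (hi : |i| ≤ M) (hr : |r| ≤ M) :
    2 * min s 0 * (-β * s * (a + i) + δ * r)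
      + 2 * min a 0 * (q * β * s * (a + i) - (σ + κ) * a)
      + 2 * min i 0 * ((1 - q) * β * s * (a + i) + σ * a - γ * i)
      + 2 * min r 0 * (κ * a + γ * i - δ * r)
      ≤ 20 * (β + σ + γ + κ + δ + 1) * (M + 1)
        * ((min s 0)^2 + (min a 0)^2 + (min i 0)^2 + (min r 0)^2) := by
  have hM : 0 ≤ M := le_trans (abs_nonneg s) hs
  set ms := min s 0 with hms_def
  set ma := min a 0 with hma_def
  set mi := min i 0 with hmi_def
  set mr := min r 0 with hmr_def
  have es : ms * s = ms^2 := by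
    rcases le_total s 0 with h | h
    · rw [hms_def, min_eq_left h]; ring
    · rw [hms_def, min_eq_right h]; ring
  have ea : ma * a = ma^2 := by
    rcases le_total a 0 with h | h
    · rw [hma_def, min_eq_left h]; ring
    · rw [hma_def, min_eq_right h]; ring
  have ei : mi * i = mi^2 := by
    rcases le_total i 0 with h | h
    · rw [hmi_def, min_eq_left h]; ring
    · rw [hmi_def, min_eq_right h]; ring
  have er : mr * r = mr^2 := by
    rcases le_total r 0 with h | h
    · rw [hmr_def, min_eq_left h]; ring
    · rw [hmr_def, min_eq_right h]; ring
  have hms0 : ms ≤ 0 := min_le_right s 0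
  have hma0 : ma ≤ 0 := min_le_right a 0
  have hmi0 : mi ≤ 0 := min_le_right i 0
  have hmr0 : mr ≤ 0 := min_le_right r 0
  obtain ⟨hs1, hs2⟩ := abs_le.1 hs
  obtain ⟨ha1, ha2⟩ := abs_le.1 ha
  obtain ⟨hi1, hi2⟩ := abs_le.1 hi
  obtain ⟨hr1, hr2⟩ := abs_le.1 hr
  have T1 : 2 * ms * (-β * s * (a + i) + δ * r)
      ≤ 4*β*M*ms^2 + δ*(ms^2 + mr^2) := by
    have hx : 2 * ms * (-β * s * (a + i) + δ * r)
        = -2*(β*ms^2*(a+i)) + 2*(δ*(ms*r)) := by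
      linear_combination (-2*β*(a+i)) * es
    rw [hx]
    have h1 : β*ms^2*(-(a+i)) ≤ β*ms^2*(2*M) :=
      mul_le_mul_of_nonneg_left (by linarith) (by positivity)
    have h2 : δ*(ms * r) ≤ δ*(ms * mr) :=
      mul_le_mul_of_nonneg_left (mul_le_mul_of_nonpos_left (min_le_left r 0) hms0) hδ
    have h3 : δ*(2*(ms*mr)) ≤ δ*(ms^2 + mr^2) :=
      mul_le_mul_of_nonneg_left (by nlinarith [sq_nonneg (ms - mr)]) hδ
    nlinarith [h1, h2, h3]
  have T2 : 2 * ma * (q * β * s * (a + i) - (σ + κ) * a)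
      ≤ 2*(q*β*(ma^2*M)) + 2*(q*β*(M*(ma^2+ms^2+mi^2))) := by
    have hx : 2 * ma * (q * β * s * (a + i) - (σ + κ) * a)
        = 2*(q*β*(ma^2*s)) + 2*(q*β*(ma*s*i)) - 2*((σ+κ)*ma^2) := by
      linear_combination (2*q*β*s - 2*(σ+κ)) * ea
    rw [hx]
    have h1 : q*β*(ma^2*s) ≤ q*β*(ma^2*M) :=
      mul_le_mul_of_nonneg_left (mul_le_mul_of_nonneg_left hs2 (sq_nonneg ma))
        (by positivity)
    have h2 : q*β*(ma*s*i) ≤ q*β*(M*(ma^2+ms^2+mi^2)) :=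
      mul_le_mul_of_nonneg_left (sairs_cross_bound hs hi) (by positivity)
    have h3 : 0 ≤ (σ+κ)*ma^2 := mul_nonneg (add_nonneg hσ hκ) (sq_nonneg ma)
    linarith [h1, h2, h3]
  have T3 : 2 * mi * ((1 - q) * β * s * (a + i) + σ * a - γ * i)
      ≤ 2*((1-q)*β*(M*(mi^2+ms^2+ma^2))) + 2*((1-q)*β*(mi^2*M)) + σ*(mi^2+ma^2) := by
    have hx : 2 * mi * ((1 - q) * β * s * (a + i) + σ * a - γ * i)
        = 2*((1-q)*β*(mi*s*a)) + 2*((1-q)*β*(mi^2*s)) + 2*(σ*(mi*a)) - 2*(γ*mi^2) := by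
      linear_combination (2*(1-q)*β*s - 2*γ) * ei
    rw [hx]
    have hq' : (0:ℝ) ≤ 1 - q := by linarith
    have h1 : (1-q)*β*(mi^2*s) ≤ (1-q)*β*(mi^2*M) :=
      mul_le_mul_of_nonneg_left (mul_le_mul_of_nonneg_left hs2 (sq_nonneg mi))
        (mul_nonneg hq' hβ)
    have h2 : (1-q)*β*(mi*s*a) ≤ (1-q)*β*(M*(mi^2+ms^2+ma^2)) :=
      mul_le_mul_of_nonneg_left (sairs_cross_bound hs ha) (mul_nonneg hq' hβ)
    have h3 : σ*(mi*a) ≤ σ*(mi*ma) :=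
      mul_le_mul_of_nonneg_left (mul_le_mul_of_nonpos_left (min_le_left a 0) hmi0) hσ
    have h4 : σ*(2*(mi*ma)) ≤ σ*(mi^2 + ma^2) :=
      mul_le_mul_of_nonneg_left (by nlinarith [sq_nonneg (mi - ma)]) hσ
    have h5 : 0 ≤ γ*mi^2 := mul_nonneg hγ (sq_nonneg mi)
    linarith [h1, h2, h3, h4, h5]
  have T4 : 2 * mr * (κ * a + γ * i - δ * r)
      ≤ κ*(mr^2+ma^2) + γ*(mr^2+mi^2) := by
    have hx : 2 * mr * (κ * a + γ * i - δ * r)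
        = 2*(κ*(mr*a)) + 2*(γ*(mr*i)) - 2*(δ*mr^2) := by
      linear_combination (-2*δ) * er
    rw [hx]
    have h1 : κ*(mr * a) ≤ κ*(mr * ma) :=
      mul_le_mul_of_nonneg_left (mul_le_mul_of_nonpos_left (min_le_left a 0) hmr0) hκ
    have h2 : γ*(mr * i) ≤ γ*(mr * mi) :=
      mul_le_mul_of_nonneg_left (mul_le_mul_of_nonpos_left (min_le_left i 0) hmr0) hγ
    have h3 : κ*(2*(mr*ma)) ≤ κ*(mr^2 + ma^2) :=
      mul_le_mul_of_nonneg_left (by nlinarith [sq_nonneg (mr - ma)]) hκ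
    have h4 : γ*(2*(mr*mi)) ≤ γ*(mr^2 + mi^2) :=
      mul_le_mul_of_nonneg_left (by nlinarith [sq_nonneg (mr - mi)]) hγ
    have h5 : 0 ≤ δ*mr^2 := mul_nonneg hδ (sq_nonneg mr)
    linarith [h1, h2, h3, h4, h5]
  have hq' : (0:ℝ) ≤ 1 - q := by linarith
  linarith [T1, T2, T3, T4,
    mul_nonneg (mul_nonneg (mul_nonneg hq0 hβ) hM) (sq_nonneg ms),
    mul_nonneg (mul_nonneg (mul_nonneg hq0 hβ) hM) (sq_nonneg ma),
    mul_nonneg (mul_nonneg (mul_nonneg hq0 hβ) hM) (sq_nonneg mi),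
    mul_nonneg (mul_nonneg (mul_nonneg hq0 hβ) hM) (sq_nonneg mr),
    mul_nonneg (mul_nonneg (mul_nonneg hq' hβ) hM) (sq_nonneg ms),
    mul_nonneg (mul_nonneg (mul_nonneg hq' hβ) hM) (sq_nonneg ma),
    mul_nonneg (mul_nonneg (mul_nonneg hq' hβ) hM) (sq_nonneg mi),
    mul_nonneg (mul_nonneg (mul_nonneg hq' hβ) hM) (sq_nonneg mr),
    mul_nonneg (mul_nonneg hβ hM) (sq_nonneg ms),
    mul_nonneg (mul_nonneg hβ hM) (sq_nonneg ma),
    mul_nonneg (mul_nonneg hβ hM) (sq_nonneg mi),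
    mul_nonneg (mul_nonneg hβ hM) (sq_nonneg mr),
    mul_nonneg hβ (sq_nonneg ms), mul_nonneg hβ (sq_nonneg ma),
    mul_nonneg hβ (sq_nonneg mi), mul_nonneg hβ (sq_nonneg mr),
    mul_nonneg hσ (sq_nonneg ms), mul_nonneg hσ (sq_nonneg ma),
    mul_nonneg hσ (sq_nonneg mi), mul_nonneg hσ (sq_nonneg mr),
    mul_nonneg hγ (sq_nonneg ms), mul_nonneg hγ (sq_nonneg ma),
    mul_nonneg hγ (sq_nonneg mi), mul_nonneg hγ (sq_nonneg mr),
    mul_nonneg hκ (sq_nonneg ms), mul_nonneg hκ (sq_nonneg ma),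
    mul_nonneg hκ (sq_nonneg mi), mul_nonneg hκ (sq_nonneg mr),
    mul_nonneg hδ (sq_nonneg ms), mul_nonneg hδ (sq_nonneg ma),
    mul_nonneg hδ (sq_nonneg mi), mul_nonneg hδ (sq_nonneg mr),
    mul_nonneg hM (sq_nonneg ms), mul_nonneg hM (sq_nonneg ma),
    mul_nonneg hM (sq_nonneg mi), mul_nonneg hM (sq_nonneg mr),
    sq_nonneg ms, sq_nonneg ma, sq_nonneg mi, sq_nonneg mr,
    mul_nonneg (mul_nonneg hσ hM) (sq_nonneg ms),
    mul_nonneg (mul_nonneg hσ hM) (sq_nonneg ma),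
    mul_nonneg (mul_nonneg hσ hM) (sq_nonneg mi),
    mul_nonneg (mul_nonneg hσ hM) (sq_nonneg mr),
    mul_nonneg (mul_nonneg hγ hM) (sq_nonneg ms),
    mul_nonneg (mul_nonneg hγ hM) (sq_nonneg ma),
    mul_nonneg (mul_nonneg hγ hM) (sq_nonneg mi),
    mul_nonneg (mul_nonneg hγ hM) (sq_nonneg mr),
    mul_nonneg (mul_nonneg hκ hM) (sq_nonneg ms),
    mul_nonneg (mul_nonneg hκ hM) (sq_nonneg ma),
    mul_nonneg (mul_nonneg hκ hM) (sq_nonneg mi),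
    mul_nonneg (mul_nonneg hκ hM) (sq_nonneg mr),
    mul_nonneg (mul_nonneg hδ hM) (sq_nonneg ms),
    mul_nonneg (mul_nonneg hδ hM) (sq_nonneg ma),
    mul_nonneg (mul_nonneg hδ hM) (sq_nonneg mi),
    mul_nonneg (mul_nonneg hδ hM) (sq_nonneg mr)]

/-- Nonnegativity of solutions (forward invariance of the nonnegative orthant). -/
lemma sairs_nonneg (β σ γ κ δ q : ℝ)
    (hβ : 0 ≤ β) (hσ : 0 ≤ σ) (hγ : 0 ≤ γ) (hκ : 0 ≤ κ) (hδ : 0 ≤ δ)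
    (hq0 : 0 ≤ q) (hq1 : q ≤ 1)
    (S A I R : ℝ → ℝ)
    (hS : ∀ t ≥ (0 : ℝ), HasDerivAt S (-β * S t * (A t + I t) + δ * R t) t)
    (hA : ∀ t ≥ (0 : ℝ), HasDerivAt A (q * β * S t * (A t + I t) - (σ + κ) * A t) t)
    (hI : ∀ t ≥ (0 : ℝ),
      HasDerivAt I ((1 - q) * β * S t * (A t + I t) + σ * A t - γ * I t) t)
    (hR : ∀ t ≥ (0 : ℝ), HasDerivAt R (κ * A t + γ * I t - δ * R t) t)
    (h0S : 0 ≤ S 0) (h0A : 0 ≤ A 0) (h0I : 0 ≤ I 0) (h0R : 0 ≤ R 0) :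
    ∀ t ≥ (0:ℝ), 0 ≤ S t ∧ 0 ≤ A t ∧ 0 ≤ I t ∧ 0 ≤ R t := by
  intro T hT
  have cS : ContinuousOn S (Set.Icc 0 T) :=
    fun x hx => ((hS x hx.1).continuousAt).continuousWithinAt
  have cA : ContinuousOn A (Set.Icc 0 T) :=
    fun x hx => ((hA x hx.1).continuousAt).continuousWithinAt
  have cI : ContinuousOn I (Set.Icc 0 T) :=
    fun x hx => ((hI x hx.1).continuousAt).continuousWithinAt
  have cR : ContinuousOn R (Set.Icc 0 T) :=
    fun x hx => ((hR x hx.1).continuousAt).continuousWithinAt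
  obtain ⟨MS, hMS⟩ := isCompact_Icc.exists_bound_of_continuousOn cS
  obtain ⟨MA, hMA⟩ := isCompact_Icc.exists_bound_of_continuousOn cA
  obtain ⟨MI, hMI⟩ := isCompact_Icc.exists_bound_of_continuousOn cI
  obtain ⟨MR, hMR⟩ := isCompact_Icc.exists_bound_of_continuousOn cR
  set M := max (max MS MA) (max MI MR) with hM_def
  have bS : ∀ x ∈ Set.Icc (0:ℝ) T, |S x| ≤ M := fun x hx =>
    le_trans (by simpa [Real.norm_eq_abs] using hMS x hx)
      ((le_max_left MS MA).trans (le_max_left _ _))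
  have bA : ∀ x ∈ Set.Icc (0:ℝ) T, |A x| ≤ M := fun x hx =>
    le_trans (by simpa [Real.norm_eq_abs] using hMA x hx)
      ((le_max_right MS MA).trans (le_max_left _ _))
  have bI : ∀ x ∈ Set.Icc (0:ℝ) T, |I x| ≤ M := fun x hx =>
    le_trans (by simpa [Real.norm_eq_abs] using hMI x hx)
      ((le_max_left MI MR).trans (le_max_right _ _))
  have bR : ∀ x ∈ Set.Icc (0:ℝ) T, |R x| ≤ M := fun x hx =>
    le_trans (by simpa [Real.norm_eq_abs] using hMR x hx)
      ((le_max_right MI MR).trans (le_max_right _ _))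
  set K := 20 * (β + σ + γ + κ + δ + 1) * (M + 1) with hK_def
  set N : ℝ → ℝ := fun t =>
    (min (S t) 0)^2 + (min (A t) 0)^2 + (min (I t) 0)^2 + (min (R t) 0)^2 with hN_def
  set N' : ℝ → ℝ := fun t =>
      2 * min (S t) 0 * (-β * S t * (A t + I t) + δ * R t)
      + 2 * min (A t) 0 * (q * β * S t * (A t + I t) - (σ + κ) * A t)
      + 2 * min (I t) 0 * ((1 - q) * β * S t * (A t + I t) + σ * A t - γ * I t)
      + 2 * min (R t) 0 * (κ * A t + γ * I t - δ * R t) with hN'_def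
  have hNd : ∀ t ∈ Set.Icc (0:ℝ) T, HasDerivAt N (N' t) t := by
    intro t ht
    have d1 := (sairs_hasDerivAt_negSq (S t)).comp t (hS t ht.1)
    have d2 := (sairs_hasDerivAt_negSq (A t)).comp t (hA t ht.1)
    have d3 := (sairs_hasDerivAt_negSq (I t)).comp t (hI t ht.1)
    have d4 := (sairs_hasDerivAt_negSq (R t)).comp t (hR t ht.1)
    have := ((d1.add d2).add d3).add d4
    simpa [hN_def, hN'_def, Function.comp, mul_assoc, Pi.add_def] using this
  have hkey : ∀ t ∈ Set.Icc (0:ℝ) T, N' t ≤ K * N t := by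
    intro t ht
    exact sairs_key_ineq β σ γ κ δ q M (S t) (A t) (I t) (R t)
      hβ hσ hγ hκ hδ hq0 hq1 (bS t ht) (bA t ht) (bI t ht) (bR t ht)
  have hN0 : N 0 = 0 := by
    simp [hN_def, min_eq_right h0S, min_eq_right h0A, min_eq_right h0I, min_eq_right h0R]
  have hNT : N T ≤ 0 := by
    have := sairs_gron_Icc hT hNd hkey
    rwa [hN0, zero_mul] at this
  have hS2 : (min (S T) 0)^2 = 0 ∧ (min (A T) 0)^2 = 0 ∧
      (min (I T) 0)^2 = 0 ∧ (min (R T) 0)^2 = 0 := by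
    have h1 := sq_nonneg (min (S T) 0)
    have h2 := sq_nonneg (min (A T) 0)
    have h3 := sq_nonneg (min (I T) 0)
    have h4 := sq_nonneg (min (R T) 0)
    have hNT' : (min (S T) 0)^2 + (min (A T) 0)^2 + (min (I T) 0)^2 + (min (R T) 0)^2 ≤ 0 :=
      hNT
    exact ⟨by linarith, by linarith, by linarith, by linarith⟩
  obtain ⟨e1, e2, e3, e4⟩ := hS2
  exact ⟨min_eq_right_iff.1 (sq_eq_zero_iff.1 e1), min_eq_right_iff.1 (sq_eq_zero_iff.1 e2),
    min_eq_right_iff.1 (sq_eq_zero_iff.1 e3), min_eq_right_iff.1 (sq_eq_zero_iff.1 e4)⟩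

end SairsAux

/-- Global asymptotic stability of the disease-free equilibrium of the group
SAIR(S) model when `R₀ < 1`: every solution starting in the unit simplex converges to
`(S, A, I, R) = (1, 0, 0, 0)` as `t → ∞`. -/
theorem sairs_dfe_GAS
    (β σ γ κ δ q : ℝ)
    (hβ : 0 < β) (hσ : 0 < σ) (hγ : 0 < γ) (hκ : 0 < κ) (hδ : 0 < δ)
    (hq : q ∈ Set.Icc (0 : ℝ) 1)
    (hR0 : max (β / (κ + γ + σ)) (β * (q * γ + (1 - q) * κ + σ) / (γ * (κ + σ))) < 1)
    (S A I R : ℝ → ℝ)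
    (hS : ∀ t ≥ (0 : ℝ), HasDerivAt S (-β * S t * (A t + I t) + δ * R t) t)
    (hA : ∀ t ≥ (0 : ℝ), HasDerivAt A (q * β * S t * (A t + I t) - (σ + κ) * A t) t)
    (hI : ∀ t ≥ (0 : ℝ),
      HasDerivAt I ((1 - q) * β * S t * (A t + I t) + σ * A t - γ * I t) t)
    (hR : ∀ t ≥ (0 : ℝ), HasDerivAt R (κ * A t + γ * I t - δ * R t) t)
    (h0 : S 0 ∈ Set.Icc (0 : ℝ) 1 ∧ A 0 ∈ Set.Icc (0 : ℝ) 1 ∧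
      I 0 ∈ Set.Icc (0 : ℝ) 1 ∧ R 0 ∈ Set.Icc (0 : ℝ) 1)
    (hsum0 : S 0 + A 0 + I 0 + R 0 = 1) :
    Tendsto S atTop (nhds 1) ∧ Tendsto A atTop (nhds 0) ∧
      Tendsto I atTop (nhds 0) ∧ Tendsto R atTop (nhds 0) := by
  obtain ⟨hq0, hq1⟩ := hq
  obtain ⟨⟨h0S, _⟩, ⟨h0A, _⟩, ⟨h0I, _⟩, ⟨h0R, _⟩⟩ := h0
  -- R0 < 1 unpacked
  have hden1 : (0:ℝ) < κ + γ + σ := by linarith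
  have hden2 : (0:ℝ) < γ * (κ + σ) := by positivity
  have hR01 : β < κ + γ + σ := by
    have := (max_lt_iff.1 hR0).1
    rwa [div_lt_one hden1] at this
  have hR02 : β * (q * γ + (1 - q) * κ + σ) < γ * (κ + σ) := by
    have := (max_lt_iff.1 hR0).2
    rwa [div_lt_one hden2] at this
  have hq' : (0:ℝ) ≤ 1 - q := by linarith
  -- nonnegativity and sum conservation
  have hnn := sairs_nonneg β σ γ κ δ q hβ.le hσ.le hγ.le hκ.le hδ.le hq0 hq1
    S A I R hS hA hI hR h0S h0A h0I h0R
  have hsum : ∀ t ≥ (0:ℝ), S t + A t + I t + R t = 1 := by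
    have hWd : ∀ t ≥ (0:ℝ),
        HasDerivAt (fun u => S u + A u + I u + R u) 0 t := by
      intro t ht
      have := (((hS t ht).add (hA t ht)).add (hI t ht)).add (hR t ht)
      refine this.congr_deriv ?_
      ring
    intro t ht
    have h1 : S t + A t + I t + R t ≤ 1 := by
      have := sairs_gron_Icc (f := fun u => S u + A u + I u + R u)
        (f' := fun _ => 0) (K := 0) ht
        (fun x hx => hWd x hx.1) (fun x _ => by norm_num)
      simpa [hsum0] using this
    have h2 : -(S t + A t + I t + R t) ≤ -1 := by
      have := sairs_gron_Icc (f := fun u => -(S u + A u + I u + R u))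
        (f' := fun _ => 0) (K := 0) ht
        (fun x hx => by simpa [Pi.neg_def] using (hWd x hx.1).neg) (fun x _ => by norm_num)
      simpa [hsum0] using this
    linarith
  have hSle1 : ∀ t ≥ (0:ℝ), S t ≤ 1 := by
    intro t ht
    obtain ⟨_, h2, h3, h4⟩ := hnn t ht
    have := hsum t ht
    linarith
  -- Lyapunov constants
  set D := γ * (σ + κ) - β * (q * γ + (1 - q) * κ + σ) with hD_def
  have hD : 0 < D := by rw [hD_def]; nlinarith [hR02]
  have hqβ : 0 ≤ q * β := mul_nonneg hq0 hβ.le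
  set τ := D / (2 * (q * β + 1)) with hτ_def
  have hτ : 0 < τ := div_pos hD (by linarith)
  set b0 := σ + κ - q * β with hb0_def
  have hb0 : 0 < b0 := by
    rw [hb0_def]
    nlinarith [hR02, mul_nonneg (mul_nonneg hβ.le hq') hκ.le,
      mul_nonneg hβ.le hσ.le, hγ]
  set a0 := σ + (1 - q) * β + τ with ha0_def
  have ha0 : 0 < a0 := by
    rw [ha0_def]
    nlinarith [mul_nonneg hq' hβ.le, hσ, hτ]
  -- coefficient identities
  have hCA : (a0 * q + b0 * (1 - q)) * β - a0 * (σ + κ) + b0 * σ = -(τ * b0) := by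
    rw [ha0_def, hb0_def]; ring
  have hCI : (a0 * q + b0 * (1 - q)) * β - b0 * γ = q * β * τ - D := by
    rw [ha0_def, hb0_def, hD_def]; ring
  set E := D - q * β * τ with hE_def
  have hE : 0 < E := by
    rw [hE_def, hτ_def, sub_pos, ← mul_div_assoc,
      div_lt_iff₀ (by linarith : (0:ℝ) < 2 * (q * β + 1))]
    nlinarith [hD, hqβ, mul_nonneg hqβ hD.le]
  -- choose η and c
  set η := min (τ * b0 / (2 * κ)) (E / (2 * γ)) with hη_def
  have hη : 0 < η := lt_min (div_pos (mul_pos hτ hb0) (by linarith))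
    (div_pos hE (by linarith))
  set c := min (min (τ * b0 / (2 * a0)) (E / (2 * b0))) δ with hc_def
  have hc : 0 < c := lt_min (lt_min (div_pos (mul_pos hτ hb0) (by linarith))
    (div_pos hE (by linarith))) hδ
  have hηκ : η * κ ≤ τ * b0 / 2 := by
    have h1 : η ≤ τ * b0 / (2 * κ) := min_le_left _ _
    have := mul_le_mul_of_nonneg_right h1 hκ.le
    calc η * κ ≤ τ * b0 / (2 * κ) * κ := this
      _ = τ * b0 / 2 := by field_simp
  have hηγ : η * γ ≤ E / 2 := by
    have h1 : η ≤ E / (2 * γ) := min_le_right _ _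
    have := mul_le_mul_of_nonneg_right h1 hγ.le
    calc η * γ ≤ E / (2 * γ) * γ := this
      _ = E / 2 := by field_simp
  have hca0 : c * a0 ≤ τ * b0 / 2 := by
    have h1 : c ≤ τ * b0 / (2 * a0) := le_trans (min_le_left _ _) (min_le_left _ _)
    have := mul_le_mul_of_nonneg_right h1 ha0.le
    calc c * a0 ≤ τ * b0 / (2 * a0) * a0 := this
      _ = τ * b0 / 2 := by field_simp
  have hcb0 : c * b0 ≤ E / 2 := by
    have h1 : c ≤ E / (2 * b0) := le_trans (min_le_left _ _) (min_le_right _ _)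
    have := mul_le_mul_of_nonneg_right h1 hb0.le
    calc c * b0 ≤ E / (2 * b0) * b0 := this
      _ = E / 2 := by field_simp
  have hcδ : c ≤ δ := min_le_right _ _
  clear_value D τ b0 a0 E η c
  -- Lyapunov function
  set V : ℝ → ℝ := fun t => a0 * A t + b0 * I t + η * R t with hV_def
  set V' : ℝ → ℝ := fun t =>
    a0 * (q * β * S t * (A t + I t) - (σ + κ) * A t)
    + b0 * ((1 - q) * β * S t * (A t + I t) + σ * A t - γ * I t)
    + η * (κ * A t + γ * I t - δ * R t) with hV'_def
  have hVd : ∀ t ≥ (0:ℝ), HasDerivAt V (V' t) t := by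
    intro t ht
    exact (((hA t ht).const_mul a0).add ((hI t ht).const_mul b0)).add
      ((hR t ht).const_mul η)
  have hVle : ∀ t ≥ (0:ℝ), V' t ≤ (-c) * V t := by
    intro t ht
    obtain ⟨hS0, hA0, hI0, hR0'⟩ := hnn t ht
    have hS1 := hSle1 t ht
    have hcβ : 0 ≤ (a0 * q + b0 * (1 - q)) * β :=
      mul_nonneg (add_nonneg (mul_nonneg ha0.le hq0) (mul_nonneg hb0.le hq')) hβ.le
    have step1 : (a0 * q + b0 * (1 - q)) * β * (S t * (A t + I t))
        ≤ (a0 * q + b0 * (1 - q)) * β * (A t + I t) := by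
      apply mul_le_mul_of_nonneg_left _ hcβ
      nlinarith [mul_nonneg (sub_nonneg.2 hS1) (add_nonneg hA0 hI0)]
    have expand : V' t = (a0 * q + b0 * (1 - q)) * β * (S t * (A t + I t))
        + (b0 * σ - a0 * (σ + κ) + η * κ) * A t
        + (η * γ - b0 * γ) * I t - η * δ * R t := by
      rw [hV'_def]; ring
    have hcoefA : ((a0 * q + b0 * (1 - q)) * β + (b0 * σ - a0 * (σ + κ) + η * κ)) * A t
        ≤ (-(c * a0)) * A t := by
      apply mul_le_mul_of_nonneg_right _ hA0
      have hX : (a0 * q + b0 * (1 - q)) * β + (b0 * σ - a0 * (σ + κ) + η * κ)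
          = -(τ * b0) + η * κ := by linear_combination hCA
      rw [hX]
      linarith [hηκ, hca0]
    have hcoefI : ((a0 * q + b0 * (1 - q)) * β + (η * γ - b0 * γ)) * I t
        ≤ (-(c * b0)) * I t := by
      apply mul_le_mul_of_nonneg_right _ hI0
      have hX : (a0 * q + b0 * (1 - q)) * β + (η * γ - b0 * γ)
          = -E + η * γ := by
        rw [hE_def]; linear_combination hCI
      rw [hX]
      linarith [hηγ, hcb0]
    have hcoefR : η * c * R t ≤ η * δ * R t :=
      mul_le_mul_of_nonneg_right (mul_le_mul_of_nonneg_left hcδ hη.le) hR0'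
    rw [expand]
    simp only [hV_def]
    linarith [step1, hcoefA, hcoefI, hcoefR]
  -- exponential decay of V
  have hVbound : ∀ t ≥ (0:ℝ), V t ≤ V 0 * Real.exp (-c * t) := by
    intro t ht
    exact sairs_gron_Icc ht (fun x hx => hVd x hx.1) (fun x hx => hVle x hx.1)
  have hVnonneg : ∀ t ≥ (0:ℝ), 0 ≤ V t := by
    intro t ht
    obtain ⟨_, hA0, hI0, hR0'⟩ := hnn t ht
    rw [hV_def]
    have := mul_nonneg ha0.le hA0
    have := mul_nonneg hb0.le hI0
    have := mul_nonneg hη.le hR0'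
    dsimp only
    linarith
  -- the exponential bound tends to zero
  have hexp0 : Tendsto (fun t : ℝ => V 0 * Real.exp (-c * t)) atTop (nhds 0) := by
    have hct : Tendsto (fun t : ℝ => c * t) atTop atTop :=
      Tendsto.const_mul_atTop hc tendsto_id
    have h2 : Tendsto (fun t : ℝ => Real.exp (-(c * t))) atTop (nhds 0) :=
      Real.tendsto_exp_neg_atTop_nhds_zero.comp hct
    have h2' : Tendsto (fun t : ℝ => Real.exp (-c * t)) atTop (nhds 0) := by
      simpa [neg_mul] using h2
    simpa using h2'.const_mul (V 0)
  have hVto0 : Tendsto V atTop (nhds 0) := by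
    apply squeeze_zero' (Filter.eventually_atTop.2 ⟨0, fun t ht => hVnonneg t ht⟩)
      (Filter.eventually_atTop.2 ⟨0, fun t ht => hVbound t ht⟩) hexp0
  -- extract convergence of A, I, R
  have hVa : ∀ t ≥ (0:ℝ), a0 * A t ≤ V t := by
    intro t ht
    obtain ⟨_, hA0, hI0, hR0'⟩ := hnn t ht
    rw [hV_def]
    have := mul_nonneg hb0.le hI0
    have := mul_nonneg hη.le hR0'
    dsimp only
    linarith
  have hVi : ∀ t ≥ (0:ℝ), b0 * I t ≤ V t := by
    intro t ht
    obtain ⟨_, hA0, hI0, hR0'⟩ := hnn t ht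
    rw [hV_def]
    have := mul_nonneg ha0.le hA0
    have := mul_nonneg hη.le hR0'
    dsimp only
    linarith
  have hVr : ∀ t ≥ (0:ℝ), η * R t ≤ V t := by
    intro t ht
    obtain ⟨_, hA0, hI0, hR0'⟩ := hnn t ht
    rw [hV_def]
    have := mul_nonneg ha0.le hA0
    have := mul_nonneg hb0.le hI0
    dsimp only
    linarith
  have hAto0 : Tendsto A atTop (nhds 0) := by
    have h1 : Tendsto (fun t => a0 * A t) atTop (nhds 0) :=
      squeeze_zero'
        (Filter.eventually_atTop.2 ⟨0, fun t ht => mul_nonneg ha0.le (hnn t ht).2.1⟩)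
        (Filter.eventually_atTop.2 ⟨0, fun t ht => hVa t ht⟩) hVto0
    have h2 := h1.const_mul (1/a0)
    rw [mul_zero] at h2
    exact h2.congr (fun t => by field_simp)
  have hIto0 : Tendsto I atTop (nhds 0) := by
    have h1 : Tendsto (fun t => b0 * I t) atTop (nhds 0) :=
      squeeze_zero'
        (Filter.eventually_atTop.2 ⟨0, fun t ht => mul_nonneg hb0.le (hnn t ht).2.2.1⟩)
        (Filter.eventually_atTop.2 ⟨0, fun t ht => hVi t ht⟩) hVto0
    have h2 := h1.const_mul (1/b0)
    rw [mul_zero] at h2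
    exact h2.congr (fun t => by field_simp)
  have hRto0 : Tendsto R atTop (nhds 0) := by
    have h1 : Tendsto (fun t => η * R t) atTop (nhds 0) :=
      squeeze_zero'
        (Filter.eventually_atTop.2 ⟨0, fun t ht => mul_nonneg hη.le (hnn t ht).2.2.2⟩)
        (Filter.eventually_atTop.2 ⟨0, fun t ht => hVr t ht⟩) hVto0
    have h2 := h1.const_mul (1/η)
    rw [mul_zero] at h2
    exact h2.congr (fun t => by field_simp)
  have hSto1 : Tendsto S atTop (nhds 1) := by
    have h1 : Tendsto (fun t => 1 - A t - I t - R t) atTop (nhds 1) := by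
      have := ((tendsto_const_nhds (x := (1:ℝ)) (f := atTop)).sub hAto0).sub hIto0 |>.sub hRto0
      simpa using this
    apply h1.congr'
    filter_upwards [eventually_ge_atTop (0:ℝ)] with t ht
    have := hsum t ht
    linarith
  exact ⟨hSto1, hAto0, hIto0, hRto0⟩
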